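/- arXiv:2202.13476 — 4 statements merged into one kernel-verified Lean document; each statement's English description precedes it below -/
import Mathlib

section
/- Let u₁ and u₂ be twice continuously differentiable solutions on [0,1] of u_i''(s) = α_i M̄'(s) u_i(s)/√(M̄(s)² + u_i(s)²) + u_i'(s) M̄''(s)/M̄'(s) with boundary conditions u_i'(0) = 0 and u_i(1) = 0. Then ∫₀¹ M̄'(s) u₁(s) u₂(s) [α₂/√(M̄(s)² + u₂(s)²) − α₁/√(M̄(s)² + u₁(s)²)] ds + ∫₀¹ (M̄''(s)/M̄'(s)) [u₁(s) u₂'(s) − u₂(s) u₁'(s)] ds = 0. -/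
open Real

/-- Nonlinear orthogonality relation for solutions of the heterogeneous
helicoseir equation. -/
theorem nonlinear_orthogonality_heterogeneous (M u₁ u₂ : ℝ → ℝ) (α₁ α₂ : ℝ)
    (hM : ContDiff ℝ 2 M) (hM' : ∀ s ∈ Set.Icc (0:ℝ) 1, deriv M s ≠ 0)
    (hu₁ : ContDiff ℝ 2 u₁) (hu₂ : ContDiff ℝ 2 u₂)
    (hode₁ : ∀ s ∈ Set.Icc (0:ℝ) 1,
      deriv (deriv u₁) s =
        α₁ * deriv M s * u₁ s / Real.sqrt ((M s) ^ 2 + (u₁ s) ^ 2) +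
          deriv u₁ s * (deriv (deriv M) s / deriv M s))
    (hode₂ : ∀ s ∈ Set.Icc (0:ℝ) 1,
      deriv (deriv u₂) s =
        α₂ * deriv M s * u₂ s / Real.sqrt ((M s) ^ 2 + (u₂ s) ^ 2) +
          deriv u₂ s * (deriv (deriv M) s / deriv M s))
    (hbc₁ : deriv u₁ 0 = 0) (hbc₁' : u₁ 1 = 0)
    (hbc₂ : deriv u₂ 0 = 0) (hbc₂' : u₂ 1 = 0) :
    (∫ s in (0:ℝ)..1, deriv M s * u₁ s * u₂ s *
        (α₂ / Real.sqrt ((M s) ^ 2 + (u₂ s) ^ 2) -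
          α₁ / Real.sqrt ((M s) ^ 2 + (u₁ s) ^ 2))) +
      (∫ s in (0:ℝ)..1, (deriv (deriv M) s / deriv M s) *
        (u₁ s * deriv u₂ s - u₂ s * deriv u₁ s)) = 0 := by
  have h2 : (2 : WithTop ℕ∞) = 1 + 1 := by norm_num
  -- basic differentiability facts
  have hu₁d : Differentiable ℝ u₁ := hu₁.differentiable two_ne_zero
  have hu₂d : Differentiable ℝ u₂ := hu₂.differentiable two_ne_zero
  have hu₁' : ContDiff ℝ 1 (deriv u₁) := (contDiff_succ_iff_deriv.mp (h2 ▸ hu₁)).2.2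
  have hu₂' : ContDiff ℝ 1 (deriv u₂) := (contDiff_succ_iff_deriv.mp (h2 ▸ hu₂)).2.2
  have hu₁'d : Differentiable ℝ (deriv u₁) := hu₁'.differentiable one_ne_zero
  have hu₂'d : Differentiable ℝ (deriv u₂) := hu₂'.differentiable one_ne_zero
  have hu₁'' : Continuous (deriv (deriv u₁)) := (contDiff_one_iff_deriv.mp hu₁').2
  have hu₂'' : Continuous (deriv (deriv u₂)) := (contDiff_one_iff_deriv.mp hu₂').2
  have hM1 : ContDiff ℝ 1 (deriv M) := (contDiff_succ_iff_deriv.mp (h2 ▸ hM)).2.2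
  have hM'c : Continuous (deriv M) := hM1.continuous
  have hM''c : Continuous (deriv (deriv M)) := (contDiff_one_iff_deriv.mp hM1).2
  set F : ℝ → ℝ := fun s => u₁ s * deriv u₂ s - u₂ s * deriv u₁ s with hF
  set G : ℝ → ℝ := fun s => u₁ s * deriv (deriv u₂) s - u₂ s * deriv (deriv u₁) s with hG
  have hFd : ∀ s : ℝ, HasDerivAt F (G s) s := by
    intro s
    have h := (((hu₁d s).hasDerivAt.mul (hu₂'d s).hasDerivAt).sub
      ((hu₂d s).hasDerivAt.mul (hu₁'d s).hasDerivAt))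
    refine h.congr_deriv ?_
    simp [hG]; ring
  have hderivF : deriv F = G := funext fun s => (hFd s).deriv
  have hGc : Continuous G :=
    ((hu₁d.continuous.mul hu₂'').sub (hu₂d.continuous.mul hu₁''))
  -- integrand names
  set f : ℝ → ℝ := fun s => deriv M s * u₁ s * u₂ s *
      (α₂ / Real.sqrt ((M s) ^ 2 + (u₂ s) ^ 2) -
        α₁ / Real.sqrt ((M s) ^ 2 + (u₁ s) ^ 2)) with hf
  set g : ℝ → ℝ := fun s => (deriv (deriv M) s / deriv M s) *
      (u₁ s * deriv u₂ s - u₂ s * deriv u₁ s) with hg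
  have huIcc : Set.uIcc (0:ℝ) 1 = Set.Icc 0 1 := Set.uIcc_of_le zero_le_one
  have hgcont : ContinuousOn g (Set.Icc 0 1) := by
    apply ContinuousOn.mul
    · exact (hM''c.continuousOn.div hM'c.continuousOn hM')
    · exact ((hu₁d.continuous.mul hu₂'d.continuous).sub
        (hu₂d.continuous.mul hu₁'d.continuous)).continuousOn
  have hgint : IntervalIntegrable g MeasureTheory.volume 0 1 := by
    apply ContinuousOn.intervalIntegrable
    rwa [huIcc]
  have hGint : IntervalIntegrable G MeasureTheory.volume 0 1 :=
    hGc.intervalIntegrable 0 1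
  have hfg : ∀ s ∈ Set.Icc (0:ℝ) 1, G s = f s + g s := by
    intro s hs
    simp only [hG, hf, hg]
    rw [hode₁ s hs, hode₂ s hs]
    ring
  have hGval : (∫ s in (0:ℝ)..1, G s) = 0 := by
    rw [← hderivF]
    rw [intervalIntegral.integral_deriv_eq_sub (fun x _ => (hFd x).differentiableAt)]
    · simp [hF, hbc₁, hbc₁', hbc₂, hbc₂']
    · rw [hderivF]; exact hGint
  have key : (∫ s in (0:ℝ)..1, f s) = (∫ s in (0:ℝ)..1, G s) - ∫ s in (0:ℝ)..1, g s := by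
    rw [← intervalIntegral.integral_sub hGint hgint]
    apply intervalIntegral.integral_congr
    intro s hs
    rw [huIcc] at hs
    have := hfg s hs
    simp [this]
  calc (∫ s in (0:ℝ)..1, f s) + (∫ s in (0:ℝ)..1, g s)
      = ∫ s in (0:ℝ)..1, G s := by rw [key]; ring
    _ = 0 := hGval
end

section
/- Let u₁ and u₂ be twice continuously differentiable solutions on [0,1] of u_i''(s) + α_i u_i(s)/√((1-s)² + u_i(s)²) = 0 with u_i'(0) = 0 and u_i(1) = 0. Then ∫₀¹ u₁(s) u₂(s) [α₁/√((1-s)² + u₁(s)²) − α₂/√((1-s)² + u₂(s)²)] ds = 0. -/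
open Real

/-- Nonlinear orthogonality relation for the homogeneous helicoseir. -/
theorem nonlinear_orthogonality_homogeneous (u₁ u₂ : ℝ → ℝ) (α₁ α₂ : ℝ)
    (hα₁ : 0 < α₁) (hα₂ : 0 < α₂)
    (hu₁ : ContDiff ℝ 2 u₁) (hu₂ : ContDiff ℝ 2 u₂)
    (hode₁ : ∀ s ∈ Set.Icc (0:ℝ) 1,
      deriv (deriv u₁) s + α₁ * u₁ s / Real.sqrt ((1 - s) ^ 2 + (u₁ s) ^ 2) = 0)
    (hode₂ : ∀ s ∈ Set.Icc (0:ℝ) 1,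
      deriv (deriv u₂) s + α₂ * u₂ s / Real.sqrt ((1 - s) ^ 2 + (u₂ s) ^ 2) = 0)
    (hbc₁ : deriv u₁ 0 = 0) (hbc₁' : u₁ 1 = 0)
    (hbc₂ : deriv u₂ 0 = 0) (hbc₂' : u₂ 1 = 0) :
    (∫ s in (0:ℝ)..1, u₁ s * u₂ s *
        (α₁ / Real.sqrt ((1 - s) ^ 2 + (u₁ s) ^ 2) -
          α₂ / Real.sqrt ((1 - s) ^ 2 + (u₂ s) ^ 2))) = 0 := by
  set W : ℝ → ℝ := fun s => deriv u₁ s * u₂ s - deriv u₂ s * u₁ s with hW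
  have hd1 : Differentiable ℝ u₁ := hu₁.differentiable (by norm_num)
  have hd2 : Differentiable ℝ u₂ := hu₂.differentiable (by norm_num)
  have hd1' : Differentiable ℝ (deriv u₁) :=
    (hu₁.iterate_deriv' 1 1).differentiable (by norm_num)
  have hd2' : Differentiable ℝ (deriv u₂) :=
    (hu₂.iterate_deriv' 1 1).differentiable (by norm_num)
  have hWd : ∀ s : ℝ, HasDerivAt W
      (deriv (deriv u₁) s * u₂ s - deriv (deriv u₂) s * u₁ s) s := by
    intro s
    have h1 := ((hd1' s).hasDerivAt.mul (hd2 s).hasDerivAt).sub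
      ((hd2' s).hasDerivAt.mul (hd1 s).hasDerivAt)
    refine h1.congr_deriv ?_
    ring
  have hcont : Continuous fun s =>
      deriv (deriv u₁) s * u₂ s - deriv (deriv u₂) s * u₁ s := by
    have c1 : Continuous (deriv (deriv u₁)) := by
      have := (hu₁.iterate_deriv' 0 2).continuous
      simpa using this
    have c2 : Continuous (deriv (deriv u₂)) := by
      have := (hu₂.iterate_deriv' 0 2).continuous
      simpa using this
    exact (c1.mul hd2.continuous).sub (c2.mul hd1.continuous)
  have key : (∫ s in (0:ℝ)..1,
      (deriv (deriv u₁) s * u₂ s - deriv (deriv u₂) s * u₁ s)) = W 1 - W 0 :=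
    intervalIntegral.integral_eq_sub_of_hasDerivAt
      (fun s _ => hWd s) (hcont.intervalIntegrable 0 1)
  have hW10 : W 1 - W 0 = 0 := by
    simp [hW, hbc₁, hbc₁', hbc₂, hbc₂']
  have hcongr : (∫ s in (0:ℝ)..1, u₁ s * u₂ s *
        (α₁ / Real.sqrt ((1 - s) ^ 2 + (u₁ s) ^ 2) -
          α₂ / Real.sqrt ((1 - s) ^ 2 + (u₂ s) ^ 2)))
      = ∫ s in (0:ℝ)..1,
        -(deriv (deriv u₁) s * u₂ s - deriv (deriv u₂) s * u₁ s) := by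
    apply intervalIntegral.integral_congr
    intro s hs
    rw [Set.uIcc_of_le (by norm_num : (0:ℝ) ≤ 1)] at hs
    have h1 : deriv (deriv u₁) s = -(α₁ * u₁ s / Real.sqrt ((1 - s) ^ 2 + (u₁ s) ^ 2)) := by
      linarith [hode₁ s hs]
    have h2 : deriv (deriv u₂) s = -(α₂ * u₂ s / Real.sqrt ((1 - s) ^ 2 + (u₂ s) ^ 2)) := by
      linarith [hode₂ s hs]
    show u₁ s * u₂ s * (α₁ / Real.sqrt ((1 - s) ^ 2 + (u₁ s) ^ 2) - α₂ / Real.sqrt ((1 - s) ^ 2 + (u₂ s) ^ 2)) = -(deriv (deriv u₁) s * u₂ s - deriv (deriv u₂) s * u₁ s)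
    rw [h1, h2]
    ring
  rw [hcongr, intervalIntegral.integral_neg, key, hW10, neg_zero]
end

section
/- The solution ũ(s) = √(α(1-s)) · J₁(2√(α(1-s))) of the linearized homogeneous helicoseir equation satisfies the boundary condition ũ'(0) = 0 if and only if J₀(2√α) = 0, i.e. if and only if α = σ_{0,n}²/4 for some n, where σ_{0,n} is a zero of the Bessel function J₀. -/
open Real

/-- Bessel function of the first kind of real order ν, defined by its series. -/
noncomputable def besselJ (ν x : ℝ) : ℝ :=
  ∑' k : ℕ, ((-1 : ℝ) ^ k / ((Nat.factorial k : ℝ) * Real.Gamma (k + ν + 1))) *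
    (x / 2) ^ (2 * (k : ℝ) + ν)

/-- coefficient -/
noncomputable def bc (k : ℕ) : ℝ := (-1 : ℝ) ^ k / ((Nat.factorial k : ℝ) * (Nat.factorial (k+1) : ℝ))

noncomputable def bG (y : ℝ) : ℝ := ∑' k : ℕ, bc k * y ^ (k + 1)

lemma J0_eq (y : ℝ) (hy : 0 ≤ y) :
    besselJ 0 (2 * Real.sqrt y) = ∑' k : ℕ, ((-1:ℝ)^k / ((Nat.factorial k : ℝ) * (Nat.factorial k : ℝ))) * y ^ k := by
  unfold besselJ
  apply tsum_congr
  intro k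
  have h1 : ((k:ℝ) + 0 + 1) = (k:ℝ) + 1 := by ring
  rw [h1, Real.Gamma_nat_eq_factorial]
  have h2 : (2 * Real.sqrt y / 2) = Real.sqrt y := by ring
  rw [h2]
  have h3 : (2 * (k:ℝ) + 0) = ((2*k : ℕ) : ℝ) := by push_cast; ring
  rw [h3, Real.rpow_natCast]
  congr 1
  rw [pow_mul, Real.sq_sqrt hy]

lemma J1_eq (y : ℝ) (hy : 0 ≤ y) :
    Real.sqrt y * besselJ 1 (2 * Real.sqrt y) = bG y := by
  unfold besselJ bG
  rw [← tsum_mul_left]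
  apply tsum_congr
  intro k
  have h2 : (2 * Real.sqrt y / 2) = Real.sqrt y := by ring
  rw [h2]
  have h1 : ((k:ℝ) + 1 + 1) = ((k+1 : ℕ):ℝ) + 1 := by push_cast; ring
  rw [h1, Real.Gamma_nat_eq_factorial]
  have h3 : (2 * (k:ℝ) + 1) = ((2*k+1 : ℕ) : ℝ) := by push_cast; ring
  rw [h3, Real.rpow_natCast]
  have h4 : Real.sqrt y ^ (2*k+1) = y ^ k * Real.sqrt y := by
    rw [pow_succ, pow_mul, Real.sq_sqrt hy]
  rw [h4, bc]
  have h5 : Real.sqrt y * Real.sqrt y = y := Real.mul_self_sqrt hy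
  calc Real.sqrt y * ((-1:ℝ)^k / ((Nat.factorial k : ℝ) * (Nat.factorial (k+1) : ℝ)) * (y ^ k * Real.sqrt y))
      = (-1:ℝ)^k / ((Nat.factorial k : ℝ) * (Nat.factorial (k+1) : ℝ)) * (y ^ k * (Real.sqrt y * Real.sqrt y)) := by ring
    _ = (-1:ℝ)^k / ((Nat.factorial k : ℝ) * (Nat.factorial (k+1) : ℝ)) * y ^ (k+1) := by rw [h5]; ring

lemma hasDerivAt_bG (y : ℝ) :
    HasDerivAt bG (∑' k : ℕ, ((-1:ℝ)^k / ((Nat.factorial k : ℝ) * (Nat.factorial k : ℝ))) * y ^ k) y := by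
  set R : ℝ := |y| + 1 with hR
  have hR1 : 1 ≤ R := by simp [hR]
  have hRpos : (0:ℝ) < R := by linarith
  have key := hasDerivAt_tsum_of_isPreconnected
    (u := fun n => R ^ n / (Nat.factorial n : ℝ))
    (t := Metric.ball (0:ℝ) R)
    (g := fun n z => bc n * z ^ (n+1))
    (g' := fun n z => ((-1:ℝ)^n / ((Nat.factorial n : ℝ) * (Nat.factorial n : ℝ))) * z ^ n)
    (y₀ := 0) (y := y)
    (Real.summable_pow_div_factorial R)
    Metric.isOpen_ball ((convex_ball (0:ℝ) R).isPreconnected)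
    ?_ ?_ (by simpa using hRpos) ?_ ?_
  · exact key
  · intro n z hz
    have h := (hasDerivAt_pow (n+1) z).const_mul (bc n)
    convert h using 1
    · rfl
    have hfact : (Nat.factorial (n+1) : ℝ) = (n+1) * Nat.factorial n := by
      rw [Nat.factorial_succ]; push_cast; ring
    rw [bc, hfact]
    have h1 : (Nat.factorial n : ℝ) ≠ 0 := Nat.cast_ne_zero.mpr (Nat.factorial_ne_zero n)
    have h2 : ((n:ℝ)+1) ≠ 0 := by positivity
    rw [Nat.add_sub_cancel]; push_cast
    field_simp
  · intro n z hz
    simp only [Metric.mem_ball, dist_zero_right, Real.norm_eq_abs] at hz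
    have h1 : (1:ℝ) ≤ (Nat.factorial n : ℝ) := by exact_mod_cast Nat.one_le_iff_ne_zero.mpr (Nat.factorial_ne_zero n)
    have h2 : |((-1:ℝ)^n / ((Nat.factorial n : ℝ) * (Nat.factorial n : ℝ))) * z ^ n|
        = |z|^n / ((Nat.factorial n : ℝ) * (Nat.factorial n : ℝ)) := by
      rw [abs_mul, abs_div, abs_pow, abs_pow, abs_neg, abs_one, one_pow]
      rw [abs_of_nonneg (by positivity : (0:ℝ) ≤ (Nat.factorial n : ℝ) * (Nat.factorial n : ℝ))]
      ring
    rw [Real.norm_eq_abs, h2]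
    have h3 : |z|^n ≤ R^n := pow_le_pow_left₀ (abs_nonneg z) hz.le n
    have h4 : (Nat.factorial n : ℝ) * 1 ≤ (Nat.factorial n : ℝ) * (Nat.factorial n : ℝ) := by
      nlinarith
    calc |z|^n / ((Nat.factorial n : ℝ) * (Nat.factorial n : ℝ))
        ≤ R^n / ((Nat.factorial n : ℝ) * 1) := by
          apply div_le_div₀ (by positivity) h3 (by positivity) h4
      _ = R^n / (Nat.factorial n : ℝ) := by rw [mul_one]
  · simpa using summable_zero.congr (fun n => by simp)
  · simp only [Metric.mem_ball, dist_zero_right, Real.norm_eq_abs, hR]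
    linarith


/-- ũ(s) = √(α(1-s)) J₁(2√(α(1-s))) satisfies ũ'(0) = 0 iff J₀(2√α) = 0,
iff α = σ²/4 for some positive zero σ of J₀. -/
theorem boundary_condition_bessel_zero (α : ℝ) (hα : 0 < α) :
    (deriv (fun t =>
        Real.sqrt (α * (1 - t)) * besselJ 1 (2 * Real.sqrt (α * (1 - t)))) 0 = 0 ↔
      besselJ 0 (2 * Real.sqrt α) = 0) ∧
    (besselJ 0 (2 * Real.sqrt α) = 0 ↔
      ∃ σ : ℝ, 0 < σ ∧ besselJ 0 σ = 0 ∧ α = σ ^ 2 / 4) := by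
  constructor
  · -- derivative computation
    have hinner : HasDerivAt (fun t : ℝ => α * (1 - t)) (-α) 0 := by
      have h := ((hasDerivAt_id (0:ℝ)).const_sub 1).const_mul α
      simpa using h
    have hcomp : HasDerivAt (fun t : ℝ => bG (α * (1 - t)))
        ((∑' k : ℕ, ((-1:ℝ)^k / ((Nat.factorial k : ℝ) * (Nat.factorial k : ℝ))) * (α*(1-(0:ℝ))) ^ k) * (-α)) 0 :=
      (hasDerivAt_bG (α * (1 - 0))).comp (h₂ := bG) 0 hinner
    have heq : (fun t : ℝ => Real.sqrt (α * (1 - t)) * besselJ 1 (2 * Real.sqrt (α * (1 - t))))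
        =ᶠ[nhds 0] (fun t : ℝ => bG (α * (1 - t))) := by
      filter_upwards [eventually_lt_nhds (show (0:ℝ) < 1 by norm_num)] with t ht
      exact J1_eq _ (by nlinarith)
    have hd : deriv (fun t : ℝ =>
        Real.sqrt (α * (1 - t)) * besselJ 1 (2 * Real.sqrt (α * (1 - t)))) 0
        = (∑' k : ℕ, ((-1:ℝ)^k / ((Nat.factorial k : ℝ) * (Nat.factorial k : ℝ))) * (α*(1-(0:ℝ))) ^ k) * (-α) := by
      rw [Filter.EventuallyEq.deriv_eq heq]
      exact hcomp.deriv
    rw [hd, J0_eq α hα.le]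
    have hsimp : (α * (1 - (0:ℝ))) = α := by ring
    rw [hsimp]
    constructor
    · intro h
      rcases mul_eq_zero.mp h with h' | h'
      · exact h'
      · exfalso; rw [neg_eq_zero] at h'; exact hα.ne' h'
    · intro h; rw [h]; ring
  · constructor
    · intro h
      refine ⟨2 * Real.sqrt α, by positivity, h, ?_⟩
      rw [mul_pow, Real.sq_sqrt hα.le]; ring
    · rintro ⟨σ, hσ, hJ, rfl⟩
      have : Real.sqrt (σ^2/4) = σ / 2 := by
        rw [show σ^2/4 = (σ/2)^2 by ring, Real.sqrt_sq (by linarith)]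
      rw [this]
      convert hJ using 2
      ring
end

section
/- Let u be a C² solution on [0,1] of u''(s) + α u(s)/√((1-s)² + u(s)²) = 0. Suppose a ∈ [0,1) with u'(a) = 0 and u(1) = 0 (taking the node b = 1). Define G(η) = u(a + η(1-a))/(1-a) for η ∈ [0,1]. Then G satisfies G''(η) + α(1-a) G(η)/√((1-η)² + G(η)²) = 0 on [0,1], with G'(0) = 0 and G(1) = 0. In other words, G is a solution of the same homogeneous helicoseir equation with the smaller eigenvalue α(1-a). -/
open Real

/-- Matrioska theorem, endpoint-node case: if u solves the homogeneous
helicoseir equation with an extremum at a and node at 1, then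
G(η) = u(a+η(1-a))/(1-a) solves the same equation with eigenvalue α(1-a). -/
theorem matrioska_homogeneous_endpoint (u : ℝ → ℝ) (α : ℝ) (hα : 0 < α)
    (hu : ContDiff ℝ 2 u)
    (hode : ∀ s ∈ Set.Icc (0:ℝ) 1,
      deriv (deriv u) s + α * u s / Real.sqrt ((1 - s) ^ 2 + (u s) ^ 2) = 0)
    (a : ℝ) (ha : a ∈ Set.Ico (0:ℝ) 1)
    (hext : deriv u a = 0) (hnode : u 1 = 0)
    (G : ℝ → ℝ) (hG : ∀ η : ℝ, G η = u (a + η * (1 - a)) / (1 - a)) :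
    (∀ η ∈ Set.Icc (0:ℝ) 1,
      deriv (deriv G) η + (α * (1 - a)) * G η /
        Real.sqrt ((1 - η) ^ 2 + (G η) ^ 2) = 0) ∧
    deriv G 0 = 0 ∧ G 1 = 0 := by
  set c : ℝ := 1 - a with hc_def
  have hc : 0 < c := by simp only [hc_def]; linarith [ha.2]
  have hdiff : Differentiable ℝ u := hu.differentiable (by norm_num)
  have hu2 : ContDiff ℝ (1 + 1) u := by exact_mod_cast hu
  have hD : Differentiable ℝ (deriv u) :=
    (contDiff_succ_iff_deriv.mp hu2).2.2.differentiable (by norm_num)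
  have hGfun : G = fun η => u (a + η * c) / c := funext hG
  have haff : ∀ η : ℝ, HasDerivAt (fun x : ℝ => a + x * c) c η := by
    intro η
    simpa using ((hasDerivAt_id η).mul_const c).const_add a
  have hG1 : ∀ η : ℝ, HasDerivAt G (deriv u (a + η * c)) η := by
    intro η
    have h2 : HasDerivAt (fun x : ℝ => u (a + x * c)) (deriv u (a + η * c) * c) η := by
      exact HasDerivAt.comp η (hdiff (a + η * c)).hasDerivAt (haff η)
    have h3 := h2.div_const c
    rw [mul_div_cancel_right₀ _ hc.ne'] at h3
    rw [hGfun]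
    exact h3
  have hG1' : deriv G = fun η => deriv u (a + η * c) := funext fun η => (hG1 η).deriv
  have hG2 : ∀ η : ℝ, deriv (deriv G) η = deriv (deriv u) (a + η * c) * c := by
    intro η
    rw [hG1']
    have h2 : HasDerivAt (fun x : ℝ => deriv u (a + x * c))
        (deriv (deriv u) (a + η * c) * c) η := by
      exact HasDerivAt.comp η (hD (a + η * c)).hasDerivAt (haff η)
    exact h2.deriv
  refine ⟨?_, ?_, ?_⟩
  · intro η hη
    obtain ⟨hη0, hη1⟩ := hη
    set t : ℝ := a + η * c with ht_def
    have ht : t ∈ Set.Icc (0:ℝ) 1 := by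
      constructor
      · have : 0 ≤ η * c := mul_nonneg hη0 hc.le
        simp only [ht_def]; linarith [ha.1]
      · simp only [ht_def, hc_def]; nlinarith [ha.2]
    have hode_t := hode t ht
    set S : ℝ := Real.sqrt ((1 - t) ^ 2 + (u t) ^ 2) with hS_def
    have hsqrt : Real.sqrt ((1 - η) ^ 2 + (G η) ^ 2) = S / c := by
      rw [hG η]
      have h1η : (1 - η) ^ 2 + (u (a + η * (1 - a)) / (1 - a)) ^ 2
          = ((1 - t) ^ 2 + (u t) ^ 2) / c ^ 2 := by
        have h1 : 1 - t = (1 - η) * c := by simp only [ht_def, hc_def]; ring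
        rw [h1]
        rw [show u (a + η * (1 - a)) / (1 - a) = u t / c from rfl]
        field_simp
      rw [h1η, hS_def, Real.sqrt_div (by positivity), Real.sqrt_sq hc.le]
    rw [hsqrt, hG2 η, hG η]
    have hkey : α * (1 - a) * (u (a + η * (1 - a)) / (1 - a)) / (S / c)
        = c * (α * u t / S) := by
      rcases eq_or_ne S 0 with hS | hS
      · simp [hS]
      · rw [hc_def] at *
        rw [show u (a + η * (1 - a)) = u t from rfl]
        field_simp
    rw [hkey]
    have : deriv (deriv u) t * c + c * (α * u t / S) = c * (deriv (deriv u) t + α * u t / S) := by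
      ring
    rw [show a + η * (1 - a) = t from rfl] at *
    rw [this, hode_t, mul_zero]
  · rw [hG1']
    simpa using hext
  · rw [hG 1]
    have : a + 1 * (1 - a) = 1 := by ring
    rw [this, hnode, zero_div]
end
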